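/- Ginzburg–Landau energy lower bound: for any continuously differentiable φ : [a,b] → ℝ with φ(a) = −1 and φ(b) = 1, the energy ∫_a^b ( (ε/2)|φ'|² + ε⁻¹ W(φ) ) dx is at least ∫_{−1}^{1} √(2W(s)) ds = 2√2/3, independently of ε > 0. -/

import Mathlib

/-- Modica–Mortola lower bound: for any C¹ profile connecting -1 to 1, the
Ginzburg–Landau energy is at least `∫_{-1}^{1} √(2W(s)) ds = 2√2/3`,
independently of `ε > 0`, where `W(s) = (1/4)(s²-1)²`. -/
theorem stmt10 (ε a b : ℝ) (hε : 0 < ε) (hab : a ≤ b) (φ : ℝ → ℝ)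
    (hφ : ContDiff ℝ 1 φ) (ha : φ a = -1) (hb : φ b = 1) :
    (∫ s in (-1:ℝ)..1, Real.sqrt (2 * ((1/4) * (s^2 - 1)^2))) = 2 * Real.sqrt 2 / 3 ∧
    2 * Real.sqrt 2 / 3 ≤
      ∫ x in a..b, (ε/2 * (deriv φ x)^2 + ε⁻¹ * ((1/4) * ((φ x)^2 - 1)^2)) := by
  have hs2 : (0:ℝ) < Real.sqrt 2 := by positivity
  have hsq : Real.sqrt 2 * Real.sqrt 2 = 2 := Real.mul_self_sqrt (by norm_num)
  set f : ℝ → ℝ := fun t => |t^2 - 1| / Real.sqrt 2 with hf_def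
  have hf_cont : Continuous f := by
    apply Continuous.div_const
    exact (continuous_pow 2 |>.sub continuous_const).abs
  have hfe : ∀ s : ℝ, Real.sqrt (2 * ((1/4) * (s^2 - 1)^2)) = f s := by
    intro s
    have h : 2 * ((1/4) * (s^2 - 1)^2) = ((s^2-1)/Real.sqrt 2)^2 := by
      rw [div_pow, Real.sq_sqrt (by norm_num : (0:ℝ) ≤ 2)]; ring
    rw [h, Real.sqrt_sq_eq_abs, abs_div, abs_of_pos hs2]
  have hint : (∫ t in (-1:ℝ)..1, f t) = 2 * Real.sqrt 2 / 3 := by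
    have h1 : (∫ t in (-1:ℝ)..1, f t) = ∫ t in (-1:ℝ)..1, (1 - t^2) / Real.sqrt 2 := by
      apply intervalIntegral.integral_congr
      intro t ht
      rw [Set.uIcc_of_le (by norm_num : (-1:ℝ) ≤ 1)] at ht
      have h1 : t^2 ≤ 1 := by nlinarith [ht.1, ht.2]
      simp only [hf_def]
      rw [abs_of_nonpos (by linarith)]
      ring
    rw [h1, intervalIntegral.integral_div,
      intervalIntegral.integral_sub intervalIntegrable_const
        ((continuous_pow 2).intervalIntegrable _ _)]
    simp [integral_pow]
    rw [div_eq_div_iff hs2.ne' (by norm_num : (3:ℝ) ≠ 0)]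
    linear_combination (-2) * (Real.sq_sqrt (by norm_num : (0:ℝ) ≤ 2))
  refine ⟨by rw [intervalIntegral.integral_congr (fun s _ => hfe s), hint], ?_⟩
  set G : ℝ → ℝ := fun u => ∫ t in (0:ℝ)..u, f t with hG_def
  have hG : ∀ u, HasDerivAt G (f u) u := fun u =>
    (hf_cont.integral_hasStrictDerivAt 0 u).hasDerivAt
  have hφd : ∀ x, HasDerivAt φ (deriv φ x) x := fun x =>
    ((hφ.differentiable one_ne_zero) x).hasDerivAt
  have hGφ : ∀ x, HasDerivAt (fun x => G (φ x)) (f (φ x) * deriv φ x) x := fun x =>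
    (hG (φ x)).comp x (hφd x)
  have hdc : Continuous (deriv φ) := hφ.continuous_deriv le_rfl
  have hderiv_cont : Continuous fun x => f (φ x) * deriv φ x :=
    (hf_cont.comp hφ.continuous).mul hdc
  have hFTC : (∫ x in a..b, f (φ x) * deriv φ x) = G (φ b) - G (φ a) :=
    intervalIntegral.integral_eq_sub_of_hasDerivAt (fun x _ => hGφ x)
      (hderiv_cont.intervalIntegrable a b)
  have hGval : G (φ b) - G (φ a) = 2 * Real.sqrt 2 / 3 := by
    rw [ha, hb]
    have h2 : G 1 - G (-1) = ∫ t in (-1:ℝ)..1, f t := by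
      simp only [hG_def]
      rw [intervalIntegral.integral_symm (-1) 0, sub_neg_eq_add, add_comm]
      exact intervalIntegral.integral_add_adjacent_intervals
        (hf_cont.intervalIntegrable _ _) (hf_cont.intervalIntegrable _ _)
    rw [h2, hint]
  have hRHScont : Continuous fun x => (ε/2 * (deriv φ x)^2 + ε⁻¹ * ((1/4) * ((φ x)^2 - 1)^2)) :=
    (continuous_const.mul (hdc.pow 2)).add
      (continuous_const.mul (continuous_const.mul
        (((hφ.continuous.pow 2).sub continuous_const).pow 2)))
  have hmono : (∫ x in a..b, f (φ x) * deriv φ x) ≤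
      ∫ x in a..b, (ε/2 * (deriv φ x)^2 + ε⁻¹ * ((1/4) * ((φ x)^2 - 1)^2)) := by
    apply intervalIntegral.integral_mono_on hab
      (hderiv_cont.intervalIntegrable a b) (hRHScont.intervalIntegrable a b)
    intro x _
    set p := deriv φ x
    set c := |(φ x)^2 - 1| with hc
    have hc2 : c^2 = ((φ x)^2 - 1)^2 := sq_abs _
    have key : c / Real.sqrt 2 * p ≤ ε/2 * p^2 + ε⁻¹ * ((1/4) * c^2) := by
      have hsq' : Real.sqrt 2 ^ 2 = 2 := Real.sq_sqrt (by norm_num)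
      have h2 : ε*p*Real.sqrt 2*c ≤ ε^2*p^2 + c^2/2 := by
        have h0 : 0 ≤ (ε*p*Real.sqrt 2 - c)^2 := sq_nonneg _
        have hexp : (ε*p*Real.sqrt 2 - c)^2
            = 2*ε^2*p^2 - 2*(ε*p*Real.sqrt 2*c) + c^2 := by
          linear_combination ε^2*p^2*hsq'
        rw [hexp] at h0; linarith
      apply le_of_mul_le_mul_left _ hε
      have hR : ε * (ε/2*p^2 + ε⁻¹*(1/4*c^2)) = ε^2*p^2/2 + c^2/4 := by
        field_simp
      have hL : ε * (c/Real.sqrt 2*p) = ε*p*Real.sqrt 2*c/2 := by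
        rw [div_mul_eq_mul_div, mul_div_assoc', div_eq_div_iff hs2.ne' two_ne_zero]
        linear_combination (-ε*c*p)*hsq'
      rw [hL, hR]; linarith
    calc f (φ x) * p = c / Real.sqrt 2 * p := rfl
      _ ≤ ε/2 * p^2 + ε⁻¹ * ((1/4) * c^2) := key
      _ = ε/2 * p^2 + ε⁻¹ * ((1/4) * ((φ x)^2-1)^2) := by rw [hc2]
  rw [hFTC, hGval] at hmono
  exact hmono
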